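/- Let V, ω be real with 0 < ω < V, and let u(x) be defined piecewise by u(x) = e^{√(V-ω)x} for x < -L, u(x) = c_e cos(√ω x) + c_o sin(√ω x) for |x| ≤ L, and u(x) = c_r e^{-√(V-ω)x} for x > L. If u and u' are continuous at x = -L and x = L for some constants c_e, c_o, c_r (not all making u identically zero on the middle interval), then √(V-ω)·(1 - 2cos²(√ω L)) = ½·(V/√ω - 2√ω)·sin(2√ω L). -/

import Mathlib

open Real

/-- matching of the piecewise linear-limit solution at `x = ±L`
forces the transcendental equation. -/
theorem linear_limit_transcendental
    (V ω L : ℝ) (hω : 0 < ω) (hV : ω < V) (hL : 0 < L)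
    (c_e c_o c_r : ℝ)
    (u : ℝ → ℝ)
    (hleft : ∀ x < -L, u x = Real.exp (Real.sqrt (V - ω) * x))
    (hmid : ∀ x, -L ≤ x → x ≤ L →
      u x = c_e * Real.cos (Real.sqrt ω * x) + c_o * Real.sin (Real.sqrt ω * x))
    (hright : ∀ x > L, u x = c_r * Real.exp (-(Real.sqrt (V - ω)) * x))
    -- continuity of u at x = -L and x = L
    (hc1 : Real.exp (Real.sqrt (V - ω) * (-L)) =
      c_e * Real.cos (Real.sqrt ω * (-L)) + c_o * Real.sin (Real.sqrt ω * (-L)))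
    (hc2 : c_e * Real.cos (Real.sqrt ω * L) + c_o * Real.sin (Real.sqrt ω * L) =
      c_r * Real.exp (-(Real.sqrt (V - ω)) * L))
    -- continuity of u' at x = -L and x = L
    (hd1 : Real.sqrt (V - ω) * Real.exp (Real.sqrt (V - ω) * (-L)) =
      -c_e * Real.sqrt ω * Real.sin (Real.sqrt ω * (-L)) +
        c_o * Real.sqrt ω * Real.cos (Real.sqrt ω * (-L)))
    (hd2 : -c_e * Real.sqrt ω * Real.sin (Real.sqrt ω * L) +
        c_o * Real.sqrt ω * Real.cos (Real.sqrt ω * L) =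
      -(Real.sqrt (V - ω)) * c_r * Real.exp (-(Real.sqrt (V - ω)) * L))
    -- nontriviality on the middle interval
    (hnontriv : ¬ (c_e = 0 ∧ c_o = 0)) :
    Real.sqrt (V - ω) * (1 - 2 * Real.cos (Real.sqrt ω * L) ^ 2) =
      (1 / 2) * (V / Real.sqrt ω - 2 * Real.sqrt ω) * Real.sin (2 * Real.sqrt ω * L) := by
  set k := Real.sqrt ω with hk
  set κ := Real.sqrt (V - ω) with hκ
  have hk0 : 0 < k := Real.sqrt_pos.mpr hω
  have hκ0 : 0 < κ := Real.sqrt_pos.mpr (by linarith)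
  have hk2 : k ^ 2 = ω := Real.sq_sqrt hω.le
  have hκ2 : κ ^ 2 = V - ω := Real.sq_sqrt (by linarith)
  set s := Real.sin (k * L) with hs
  set c := Real.cos (k * L) with hc
  rw [show k * (-L) = -(k * L) by ring, Real.cos_neg, Real.sin_neg] at hc1 hd1
  -- derive the two linear relations
  have e1 : κ * (c_e * c - c_o * s) = c_e * k * s + c_o * k * c := by
    rw [show κ * (c_e * c - c_o * s) = κ * (c_e * c + c_o * -s) by ring, ← hc1]
    rw [hd1]; ring
  have e2 : -c_e * k * s + c_o * k * c = -κ * (c_e * c + c_o * s) := by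
    rw [hc2, hd2]; ring
  have ho : c_o * (k * c + κ * s) = 0 := by linear_combination (-1/2) * e1 + (1/2) * e2
  have he : c_e * (k * s - κ * c) = 0 := by linear_combination (-1/2) * e1 + (-1/2) * e2
  have hsc : s ^ 2 + c ^ 2 = 1 := Real.sin_sq_add_cos_sq _
  have key : κ * k * (s ^ 2 - c ^ 2) = (κ ^ 2 - k ^ 2) * (s * c) := by
    rcases mul_eq_zero.mp ho with hco | hA
    · rcases mul_eq_zero.mp he with hce | hB
      · exact absurd ⟨hce, hco⟩ hnontriv
      · linear_combination (κ * s + k * c) * hB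
    · linear_combination (k * s - κ * c) * hA
  have hV' : V = κ ^ 2 + k ^ 2 := by rw [hκ2, hk2]; ring
  rw [show 2 * k * L = 2 * (k * L) by ring, Real.sin_two_mul, hV']
  field_simp
  rw [← hs, ← hc]
  linear_combination key - k * κ * hsc
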